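/- Suppose that for every τ the bilinear form a(τ) is symmetric, ω^{ij}(τ) ∈ W, and the cell-problem condition a(τ)(ω^{ij}(τ) + Π^{ij}(τ), v) = 0 holds for all v ∈ W and each pair (i,j). Set Ξ^{ij}(τ) = ω^{ij}(τ) + Π^{ij}(τ). Then for all pairs (i,j), (k,l), the homogenized coefficient function τ ↦ a(τ)(Ξ^{kl}(τ), Ξ^{ij}(τ)) is differentiable at τ = 0 and its derivative equals a'(0)(Ξ^{kl}(0), Ξ^{ij}(0)) + a(0)((Π^{kl})'(0), Ξ^{ij}(0)) + a(0)(Ξ^{kl}(0), (Π^{ij})'(0)); in particular, the derivatives of the correctors ω^{ij} do not enter the formula. -/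

import Mathlib

lemma deriv_mem_of_isClosed {H : Type*} [NormedAddCommGroup H] [NormedSpace ℝ H]
    (W : Submodule ℝ H) (hWclosed : IsClosed (W : Set H))
    {f : ℝ → H} {f' : H} (hf : HasDerivAt f f' 0) (hfW : ∀ τ, f τ ∈ W) : f' ∈ W := by
  have ht := hasDerivAt_iff_tendsto_slope.mp hf
  refine hWclosed.mem_of_tendsto ht ?_
  filter_upwards with b
  simpa [slope_def_module] using W.smul_mem (b - 0)⁻¹ (W.sub_mem (hfW b) (hfW 0))

/-- for a differentiable family of symmetric bilinear forms `a(τ)` whose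
correctors `ω^{ij}(τ) ∈ W` solve the cell problems
`a(τ)(ω^{ij}(τ) + Π^{ij}(τ), v) = 0` for all `v ∈ W`, the homogenized coefficient
`τ ↦ a(τ)(Ξ^{kl}(τ), Ξ^{ij}(τ))`, with `Ξ^{ij} = ω^{ij} + Π^{ij}`, is differentiable
at `τ = 0` with derivative
`a'(0)(Ξ^{kl}(0), Ξ^{ij}(0)) + a(0)((Π^{kl})'(0), Ξ^{ij}(0)) + a(0)(Ξ^{kl}(0), (Π^{ij})'(0))`;
the derivatives of the correctors `ω^{ij}` do not enter. -/
theorem homogenized_coeffs_sensitivity {H : Type*} [NormedAddCommGroup H]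
    [NormedSpace ℝ H]
    (W : Submodule ℝ H) (hWclosed : IsClosed (W : Set H))
    (a : ℝ → H →L[ℝ] H →L[ℝ] ℝ) (a' : H →L[ℝ] H →L[ℝ] ℝ)
    (ha : HasDerivAt a a' 0)
    (hsymm : ∀ (τ : ℝ) (x y : H), a τ x y = a τ y x)
    (n : ℕ) (P ω : Fin n → Fin n → ℝ → H) (P' : Fin n → Fin n → H)
    (hP : ∀ i j, HasDerivAt (P i j) (P' i j) 0)
    (hω : ∀ i j, DifferentiableAt ℝ (ω i j) 0)
    (hωW : ∀ i j (τ : ℝ), ω i j τ ∈ W)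
    (hcell : ∀ i j (τ : ℝ), ∀ v ∈ W, a τ (ω i j τ + P i j τ) v = 0)
    (i j k l : Fin n) :
    HasDerivAt (fun τ : ℝ => a τ (ω k l τ + P k l τ) (ω i j τ + P i j τ))
      (a' (ω k l 0 + P k l 0) (ω i j 0 + P i j 0)
        + a 0 (P' k l) (ω i j 0 + P i j 0)
        + a 0 (ω k l 0 + P k l 0) (P' i j)) 0 := by
  have hωkl := (hω k l).hasDerivAt
  have hωij := (hω i j).hasDerivAt
  have hx : HasDerivAt (fun τ => ω k l τ + P k l τ)
      (deriv (ω k l) 0 + P' k l) 0 := hωkl.add (hP k l)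
  have hy : HasDerivAt (fun τ => ω i j τ + P i j τ)
      (deriv (ω i j) 0 + P' i j) 0 := hωij.add (hP i j)
  have h1 := (ha.clm_apply hx).clm_apply hy
  have hmkl : deriv (ω k l) 0 ∈ W := deriv_mem_of_isClosed W hWclosed hωkl (hωW k l)
  have hmij : deriv (ω i j) 0 ∈ W := deriv_mem_of_isClosed W hWclosed hωij (hωW i j)
  have e1 : a 0 (deriv (ω k l) 0) (ω i j 0 + P i j 0) = 0 := by
    rw [hsymm]; exact hcell i j 0 _ hmkl
  have e2 : a 0 (ω k l 0 + P k l 0) (deriv (ω i j) 0) = 0 :=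
    hcell k l 0 _ hmij
  refine h1.congr_deriv ?_
  simp only [map_add, ContinuousLinearMap.add_apply] at e1 e2 ⊢
  linarith
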